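/- arXiv:2512.16231 — 2 statements merged into one kernel-verified Lean document; each statement's English description precedes it below -/
import Mathlib

section
/- Let a > 0, b ∈ ℝ, and define l(n) = logit(1 − Φ(a·√n + b)) for n > 0, where Φ is the standard normal CDF and logit(x) = log(x) − log(1−x). Then l is differentiable on (0,∞) and lim_{n→∞} l′(n) = −a²/2. -/
open Filter MeasureTheory Set

/-- Standard normal CDF. -/
noncomputable def Phi (x : ℝ) : ℝ :=
  ∫ t in Set.Iio x, (Real.sqrt (2 * Real.pi))⁻¹ * Real.exp (-t ^ 2 / 2)

/-- Standard normal density. -/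
noncomputable def stdPdf (x : ℝ) : ℝ := (Real.sqrt (2 * Real.pi))⁻¹ * Real.exp (-x ^ 2 / 2)

/-- Standard normal quantile function. -/
noncomputable def PhiInv : ℝ → ℝ := Function.invFun Phi

/-- Logit function. -/
noncomputable def logit (x : ℝ) : ℝ := Real.log x - Real.log (1 - x)

lemma stdPdf_pos (x : ℝ) : 0 < stdPdf x := by
  apply mul_pos (inv_pos.2 (Real.sqrt_pos.2 (by positivity))) (Real.exp_pos _)

lemma stdPdf_cont : Continuous stdPdf := by
  unfold stdPdf; fun_prop

lemma stdPdf_le_one (x : ℝ) : stdPdf x ≤ 1 := by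
  unfold stdPdf
  have h1 : Real.exp (-x ^ 2 / 2) ≤ 1 := by
    rw [Real.exp_le_one_iff]
    have : (0:ℝ) ≤ x ^ 2 / 2 := by positivity
    linarith
  have h2 : (1:ℝ) ≤ Real.sqrt (2 * Real.pi) := by
    rw [show (1:ℝ) = Real.sqrt 1 by simp]
    apply Real.sqrt_le_sqrt
    nlinarith [Real.pi_gt_three]
  calc (Real.sqrt (2 * Real.pi))⁻¹ * Real.exp (-x ^ 2 / 2) ≤ 1 * 1 := by
        apply mul_le_mul _ h1 (Real.exp_pos _).le zero_le_one
        exact inv_le_one_of_one_le₀ h2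
    _ = 1 := by ring

lemma stdPdf_integrable : Integrable stdPdf := by
  have := (integrable_exp_neg_mul_sq (by norm_num : (0:ℝ) < 1/2)).const_mul
    (Real.sqrt (2 * Real.pi))⁻¹
  apply this.congr
  filter_upwards with x
  unfold stdPdf
  ring_nf

lemma integral_stdPdf : ∫ x, stdPdf x = 1 := by
  unfold stdPdf
  rw [MeasureTheory.integral_const_mul]
  have : ∀ x : ℝ, Real.exp (-x ^ 2 / 2) = Real.exp (-(1/2) * x ^ 2) := by
    intro x; ring_nf
  simp_rw [this, integral_gaussian]
  rw [show Real.pi / (1/2) = 2 * Real.pi by ring]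
  rw [inv_mul_cancel₀]
  positivity

lemma Phi_eq (x : ℝ) : Phi x = ∫ t in Set.Iio x, stdPdf t := rfl

lemma Phi_hasDerivAt (x : ℝ) : HasDerivAt Phi (stdPdf x) x := by
  have hrepr : Phi = fun y => Phi 0 + ∫ t in (0:ℝ)..y, stdPdf t := by
    funext y
    rw [Phi_eq, Phi_eq, ← MeasureTheory.integral_Iic_eq_integral_Iio,
      ← MeasureTheory.integral_Iic_eq_integral_Iio]
    rw [← intervalIntegral.integral_Iic_sub_Iic stdPdf_integrable.integrableOn
      stdPdf_integrable.integrableOn]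
    ring
  have h : HasDerivAt (fun y => ∫ t in (0:ℝ)..y, stdPdf t) (stdPdf x) x := by
    apply intervalIntegral.integral_hasDerivAt_right
      stdPdf_integrable.intervalIntegrable
      (stdPdf_cont.stronglyMeasurableAtFilter _ _)
      stdPdf_cont.continuousAt
  rw [hrepr]
  simpa using h

lemma tail_eq (x : ℝ) : 1 - Phi x = ∫ t in Set.Ioi x, stdPdf t := by
  have := intervalIntegral.integral_Iio_add_Ici (μ := volume) (b := x)
    stdPdf_integrable.integrableOn stdPdf_integrable.integrableOn
  rw [integral_stdPdf] at this
  rw [MeasureTheory.integral_Ici_eq_integral_Ioi] at this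
  rw [Phi_eq]
  linarith

lemma setIntegral_stdPdf_pos {s : Set ℝ} (hs : MeasurableSet s) (h : 0 < volume s) :
    0 < ∫ t in s, stdPdf t := by
  rw [MeasureTheory.setIntegral_pos_iff_support_of_nonneg_ae]
  · have : Function.support stdPdf = Set.univ := by
      ext t; simp [Function.mem_support, (stdPdf_pos t).ne']
    rwa [this, Set.univ_inter]
  · filter_upwards with t using (stdPdf_pos t).le
  · exact stdPdf_integrable.integrableOn

lemma Phi_pos (x : ℝ) : 0 < Phi x := by
  rw [Phi_eq]
  exact setIntegral_stdPdf_pos measurableSet_Iio (by simp)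

lemma Phi_lt_one (x : ℝ) : Phi x < 1 := by
  have := setIntegral_stdPdf_pos (s := Set.Ioi x) measurableSet_Ioi (by simp)
  rw [← tail_eq] at this
  linarith

lemma stdPdf_hasDerivAt (t : ℝ) : HasDerivAt stdPdf (-t * stdPdf t) t := by
  unfold stdPdf
  have h1 : HasDerivAt (fun s : ℝ => -s ^ 2 / 2) (-t) t := by
    have := ((hasDerivAt_pow 2 t).neg).div_const 2
    simpa using this.congr_deriv (by ring)
  have h2 : HasDerivAt (fun s : ℝ => Real.exp (-s ^ 2 / 2))
      (Real.exp (-t ^ 2 / 2) * (-t)) t := h1.exp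
  have := h2.const_mul (Real.sqrt (2 * Real.pi))⁻¹
  exact this.congr_deriv (by ring)

lemma stdPdf_tendsto_zero : Tendsto stdPdf atTop (nhds 0) := by
  have h1 : Tendsto (fun t : ℝ => -t ^ 2 / 2) atTop atBot := by
    apply Tendsto.atBot_div_const (by norm_num)
    exact tendsto_neg_atBot_iff.2 (tendsto_pow_atTop (by norm_num))
  have h2 : Tendsto (fun t : ℝ => Real.exp (-t ^ 2 / 2)) atTop (nhds 0) :=
    Real.tendsto_exp_atBot.comp h1
  have := h2.const_mul (Real.sqrt (2 * Real.pi))⁻¹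
  rw [mul_zero] at this
  exact this

lemma integral_mul_stdPdf (x : ℝ) (hx : 0 < x) :
    ∫ t in Set.Ioi x, t * stdPdf t = stdPdf x := by
  have := integral_Ioi_of_hasDerivAt_of_nonneg' (g := fun t => -stdPdf t)
    (g' := fun t => t * stdPdf t) (a := x) (l := 0)
    (fun t _ => (stdPdf_hasDerivAt t).neg.congr_deriv (by ring))
    (fun t ht => mul_nonneg (hx.trans ht).le (stdPdf_pos t).le)
    (by simpa using stdPdf_tendsto_zero.neg)
  simpa using this

lemma integrableOn_mul_stdPdf (x : ℝ) (hx : 0 < x) :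
    IntegrableOn (fun t => t * stdPdf t) (Set.Ioi x) := by
  apply integrableOn_Ioi_deriv_of_nonneg' (g := fun t => -stdPdf t) (l := 0)
    (fun t _ => (stdPdf_hasDerivAt t).neg.congr_deriv (by ring))
    (fun t ht => mul_nonneg (hx.trans ht).le (stdPdf_pos t).le)
    (by simpa using stdPdf_tendsto_zero.neg)

lemma tendsto_stdPdf_div : Tendsto (fun t : ℝ => -(stdPdf t / t)) atTop (nhds 0) := by
  have := stdPdf_tendsto_zero.mul tendsto_inv_atTop_zero
  rw [mul_zero] at this
  simp_rw [div_eq_mul_inv]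
  simpa using this.neg

lemma hasDerivAt_ratio (t : ℝ) (ht : t ≠ 0) :
    HasDerivAt (fun s => -(stdPdf s / s)) ((1 + 1/t^2) * stdPdf t) t := by
  have h := ((stdPdf_hasDerivAt t).div (hasDerivAt_id t) ht).neg
  apply h.congr_deriv
  simp only [id]
  field_simp
  ring

lemma integral_ratio_stdPdf (x : ℝ) (hx : 0 < x) :
    ∫ t in Set.Ioi x, (1 + 1/t^2) * stdPdf t = stdPdf x / x := by
  have := integral_Ioi_of_hasDerivAt_of_nonneg' (g := fun t => -(stdPdf t / t))
    (g' := fun t => (1 + 1/t^2) * stdPdf t) (a := x) (l := 0)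
    (fun t ht => hasDerivAt_ratio t (hx.trans_le ht).ne')
    (fun t ht => mul_nonneg (by positivity) (stdPdf_pos t).le)
    tendsto_stdPdf_div
  simpa using this

lemma integrableOn_ratio_stdPdf (x : ℝ) (hx : 0 < x) :
    IntegrableOn (fun t => (1 + 1/t^2) * stdPdf t) (Set.Ioi x) := by
  apply integrableOn_Ioi_deriv_of_nonneg' (g := fun t => -(stdPdf t / t)) (l := 0)
    (fun t ht => hasDerivAt_ratio t (hx.trans_le ht).ne')
    (fun t ht => mul_nonneg (by positivity) (stdPdf_pos t).le)
    tendsto_stdPdf_div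

lemma mills_lower {x : ℝ} (hx : 0 < x) : x * (1 - Phi x) ≤ stdPdf x := by
  rw [tail_eq]
  have h : ∫ t in Set.Ioi x, stdPdf t ≤ ∫ t in Set.Ioi x, x⁻¹ * (t * stdPdf t) := by
    apply setIntegral_mono_on stdPdf_integrable.integrableOn
      ((integrableOn_mul_stdPdf x hx).const_mul x⁻¹) measurableSet_Ioi
    intro t ht
    rw [Set.mem_Ioi] at ht
    have h1 : (1:ℝ) ≤ t / x := (one_le_div hx).2 ht.le
    have := mul_le_mul_of_nonneg_right h1 (stdPdf_pos t).le
    rw [one_mul] at this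
    calc stdPdf t ≤ t / x * stdPdf t := this
      _ = x⁻¹ * (t * stdPdf t) := by ring
  rw [MeasureTheory.integral_const_mul, integral_mul_stdPdf x hx] at h
  calc x * ∫ t in Set.Ioi x, stdPdf t ≤ x * (x⁻¹ * stdPdf x) :=
        mul_le_mul_of_nonneg_left h hx.le
    _ = stdPdf x := by field_simp

lemma mills_upper {x : ℝ} (hx : 0 < x) : stdPdf x ≤ (x + 1/x) * (1 - Phi x) := by
  rw [tail_eq]
  have h : ∫ t in Set.Ioi x, (1 + 1/t^2) * stdPdf t
      ≤ ∫ t in Set.Ioi x, (1 + 1/x^2) * stdPdf t := by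
    apply setIntegral_mono_on (integrableOn_ratio_stdPdf x hx)
      (stdPdf_integrable.integrableOn.const_mul _) measurableSet_Ioi
    intro t ht
    rw [Set.mem_Ioi] at ht
    apply mul_le_mul_of_nonneg_right _ (stdPdf_pos t).le
    have : 1/t^2 ≤ 1/x^2 := by
      apply one_div_le_one_div_of_le (by positivity)
      nlinarith
    linarith
  rw [MeasureTheory.integral_const_mul, integral_ratio_stdPdf x hx] at h
  have hfin : stdPdf x ≤ x * ((1 + 1/x^2) * ∫ t in Set.Ioi x, stdPdf t) := by
    have := mul_le_mul_of_nonneg_left h hx.le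
    calc stdPdf x = x * (stdPdf x / x) := by field_simp
      _ ≤ _ := this
  calc stdPdf x ≤ x * ((1 + 1/x^2) * ∫ t in Set.Ioi x, stdPdf t) := hfin
    _ = (x + 1/x) * ∫ t in Set.Ioi x, stdPdf t := by field_simp

lemma Phi_ge_half {x : ℝ} (hx : 2 ≤ x) : 1/2 ≤ Phi x := by
  have hx0 : 0 < x := by linarith
  have h1 := mills_lower hx0
  have h2 := stdPdf_le_one x
  have htail : 1 - Phi x ≤ 1 / x := by
    rw [le_div_iff₀ hx0]
    nlinarith
  have : 1 / x ≤ 1 / 2 := by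
    apply one_div_le_one_div_of_le (by norm_num) hx
  linarith

lemma key (a b : ℝ) (n : ℝ) (hn : 0 < n) :
    HasDerivAt (fun n : ℝ => Real.log (1 - Phi (a * Real.sqrt n + b))
        - Real.log (1 - (1 - Phi (a * Real.sqrt n + b))))
      ((-(stdPdf (a * Real.sqrt n + b) / (1 - Phi (a * Real.sqrt n + b)))
        - stdPdf (a * Real.sqrt n + b) / Phi (a * Real.sqrt n + b))
        * (a / (2 * Real.sqrt n))) n := by
  set x := a * Real.sqrt n + b with hxdef
  have hsn : 0 < Real.sqrt n := Real.sqrt_pos.2 hn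
  have hP : 0 < Phi x := Phi_pos x
  have hP1 : 0 < 1 - Phi x := by linarith [Phi_lt_one x]
  have h1 : HasDerivAt (fun m : ℝ => a * Real.sqrt m + b) (a * (1 / (2 * Real.sqrt n))) n :=
    ((Real.hasDerivAt_sqrt hn.ne').const_mul a).add_const b
  have h4 : HasDerivAt (fun m : ℝ => Phi (a * Real.sqrt m + b))
      (stdPdf x * (a * (1 / (2 * Real.sqrt n)))) n := by
    have := (Phi_hasDerivAt x).comp n h1; exact this
  have h5 : HasDerivAt (fun m : ℝ => 1 - Phi (a * Real.sqrt m + b))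
      (-(stdPdf x * (a * (1 / (2 * Real.sqrt n))))) n := h4.const_sub 1
  have h6 : HasDerivAt (fun m : ℝ => 1 - (1 - Phi (a * Real.sqrt m + b)))
      (stdPdf x * (a * (1 / (2 * Real.sqrt n)))) n := by
    simpa using h5.const_sub 1
  have hlog1 := h5.log hP1.ne'
  have hlog2 : HasDerivAt (fun m : ℝ => Real.log (1 - (1 - Phi (a * Real.sqrt m + b))))
      ((stdPdf x * (a * (1 / (2 * Real.sqrt n)))) / Phi x) n := by
    have := h6.log (by simpa using hP.ne')
    simpa using this
  rw [← hxdef] at hlog1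
  apply (hlog1.sub hlog2).congr_deriv
  field_simp

lemma sqrt_tendsto : Tendsto Real.sqrt atTop atTop := by
  apply tendsto_atTop_atTop.2
  intro c
  refine ⟨c^2, fun n hn => ?_⟩
  calc c ≤ |c| := le_abs_self c
    _ = Real.sqrt (c^2) := (Real.sqrt_sq_eq_abs c).symm
    _ ≤ Real.sqrt n := Real.sqrt_le_sqrt hn

theorem stmt3 (a b : ℝ) (ha : 0 < a) :
    DifferentiableOn ℝ (fun n : ℝ => logit (1 - Phi (a * Real.sqrt n + b))) (Set.Ioi 0) ∧
    Filter.Tendsto (deriv (fun n : ℝ => logit (1 - Phi (a * Real.sqrt n + b))))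
      Filter.atTop (nhds (-a ^ 2 / 2)) := by
  set F : ℝ → ℝ := fun n => logit (1 - Phi (a * Real.sqrt n + b)) with hF
  have hkey : ∀ n : ℝ, 0 < n → HasDerivAt F
      ((-(stdPdf (a * Real.sqrt n + b) / (1 - Phi (a * Real.sqrt n + b)))
        - stdPdf (a * Real.sqrt n + b) / Phi (a * Real.sqrt n + b))
        * (a / (2 * Real.sqrt n))) n := by
    intro n hn
    have := key a b n hn
    simpa only [hF, logit] using this
  constructor
  · intro n hn
    exact (hkey n hn).differentiableAt.differentiableWithinAt
  -- limits setup
  have hsqrt_top : Tendsto (fun n : ℝ => Real.sqrt n) atTop atTop := sqrt_tendsto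
  have hx_top : Tendsto (fun n : ℝ => a * Real.sqrt n + b) atTop atTop :=
    tendsto_atTop_add_const_right _ b (hsqrt_top.const_mul_atTop ha)
  have h2s : Tendsto (fun n : ℝ => 2 * Real.sqrt n) atTop atTop :=
    hsqrt_top.const_mul_atTop (by norm_num)
  have hinv : Tendsto (fun n : ℝ => (2 * Real.sqrt n)⁻¹) atTop (nhds 0) :=
    h2s.inv_tendsto_atTop
  have hc0 : Tendsto (fun n : ℝ => a / (2 * Real.sqrt n)) atTop (nhds 0) := by
    simp_rw [div_eq_mul_inv]
    simpa using hinv.const_mul a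
  -- A tends to a^2/2
  have h_lower : Tendsto (fun n : ℝ => (a * Real.sqrt n + b) * (a / (2 * Real.sqrt n)))
      atTop (nhds (a^2/2)) := by
    have h0 : Tendsto (fun n : ℝ => a^2/2 + a * b * (2 * Real.sqrt n)⁻¹)
        atTop (nhds (a^2/2 + a * b * 0)) :=
      tendsto_const_nhds.add (tendsto_const_nhds.mul hinv)
    rw [mul_zero, add_zero] at h0
    apply h0.congr'
    filter_upwards [eventually_gt_atTop (0:ℝ)] with n hn
    have hs : Real.sqrt n ≠ 0 := (Real.sqrt_pos.2 hn).ne'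
    field_simp
  have h_upper : Tendsto (fun n : ℝ =>
      ((a * Real.sqrt n + b) + 1/(a * Real.sqrt n + b)) * (a / (2 * Real.sqrt n)))
      atTop (nhds (a^2/2)) := by
    have hxi : Tendsto (fun n : ℝ => (a * Real.sqrt n + b)⁻¹) atTop (nhds 0) :=
      hx_top.inv_tendsto_atTop
    have h0 : Tendsto (fun n : ℝ => (a * Real.sqrt n + b) * (a / (2 * Real.sqrt n))
        + (a * Real.sqrt n + b)⁻¹ * (a / (2 * Real.sqrt n)))
        atTop (nhds (a^2/2 + 0 * 0)) := h_lower.add (hxi.mul hc0)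
    rw [zero_mul, add_zero] at h0
    apply h0.congr (fun n => by rw [one_div]; ring)
  have hA : Tendsto (fun n : ℝ => stdPdf (a * Real.sqrt n + b)
      / (1 - Phi (a * Real.sqrt n + b)) * (a / (2 * Real.sqrt n))) atTop (nhds (a^2/2)) := by
    apply tendsto_of_tendsto_of_tendsto_of_le_of_le' h_lower h_upper
    · filter_upwards [hx_top.eventually_ge_atTop 2, eventually_gt_atTop (0:ℝ)] with n hx2 hn
      set x := a * Real.sqrt n + b
      have hx0 : (0:ℝ) < x := by dsimp [x] at hx2 ⊢; linarith
      have hP1 : 0 < 1 - Phi x := by linarith [Phi_lt_one x]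
      have hc : 0 ≤ a / (2 * Real.sqrt n) := by positivity
      apply mul_le_mul_of_nonneg_right _ hc
      rw [le_div_iff₀ hP1]
      exact mills_lower hx0
    · filter_upwards [hx_top.eventually_ge_atTop 2, eventually_gt_atTop (0:ℝ)] with n hx2 hn
      set x := a * Real.sqrt n + b
      have hx0 : (0:ℝ) < x := by dsimp [x] at hx2 ⊢; linarith
      have hP1 : 0 < 1 - Phi x := by linarith [Phi_lt_one x]
      have hc : 0 ≤ a / (2 * Real.sqrt n) := by positivity
      apply mul_le_mul_of_nonneg_right _ hc
      rw [div_le_iff₀ hP1]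
      exact mills_upper hx0
  have hB : Tendsto (fun n : ℝ => stdPdf (a * Real.sqrt n + b)
      / Phi (a * Real.sqrt n + b) * (a / (2 * Real.sqrt n))) atTop (nhds 0) := by
    have h0 : Tendsto (fun n : ℝ => 2 * (a / (2 * Real.sqrt n))) atTop (nhds (2 * 0)) :=
      hc0.const_mul 2
    rw [mul_zero] at h0
    apply tendsto_of_tendsto_of_tendsto_of_le_of_le' tendsto_const_nhds h0
    · filter_upwards [eventually_gt_atTop (0:ℝ)] with n hn
      set x := a * Real.sqrt n + b
      have hc : 0 ≤ a / (2 * Real.sqrt n) := by positivity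
      have := Phi_pos x
      have := stdPdf_pos x
      positivity
    · filter_upwards [hx_top.eventually_ge_atTop 2, eventually_gt_atTop (0:ℝ)] with n hx2 hn
      set x := a * Real.sqrt n + b
      have hc : 0 ≤ a / (2 * Real.sqrt n) := by positivity
      apply mul_le_mul_of_nonneg_right _ hc
      have hP : (1:ℝ)/2 ≤ Phi x := Phi_ge_half hx2
      have hP0 : 0 < Phi x := Phi_pos x
      rw [div_le_iff₀ hP0]
      calc stdPdf x ≤ 1 := stdPdf_le_one x
        _ = 2 * (1/2) := by norm_num
        _ ≤ 2 * Phi x := by linarith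
  -- combine
  have hD : Tendsto (fun n : ℝ =>
      (-(stdPdf (a * Real.sqrt n + b) / (1 - Phi (a * Real.sqrt n + b)))
        - stdPdf (a * Real.sqrt n + b) / Phi (a * Real.sqrt n + b))
        * (a / (2 * Real.sqrt n))) atTop (nhds (-a^2/2)) := by
    have := (hA.neg).sub hB
    rw [sub_zero] at this
    have heq : -(a^2/2) = -a^2/2 := by ring
    rw [heq] at this
    apply this.congr (fun n => by ring)
  apply hD.congr'
  filter_upwards [eventually_gt_atTop (0:ℝ)] with n hn
  exact ((hkey n hn).deriv).symm
end

section
/- Let a > 0 and b ∈ ℝ, and define l(n) = logit(1 − Φ(a·√n + b)) for n > 0. Then lim_{n→∞} l(n)/n = −a²/2. -/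
open Filter MeasureTheory Set

noncomputable def gaussTail (x : ℝ) : ℝ := ∫ t in Set.Ioi x, Real.exp (-t ^ 2 / 2)

lemma aux_fun_eq : (fun t : ℝ => Real.exp (-t ^ 2 / 2)) =
    fun t : ℝ => Real.exp (-(1/2 : ℝ) * t ^ 2) := by
  funext t; congr 1; ring

lemma aux_integrable : Integrable (fun t : ℝ => Real.exp (-t ^ 2 / 2)) := by
  rw [aux_fun_eq]; exact integrable_exp_neg_mul_sq (by norm_num)

lemma gauss_total : (∫ t : ℝ, Real.exp (-t ^ 2 / 2)) = Real.sqrt (2 * Real.pi) := by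
  rw [aux_fun_eq, integral_gaussian]
  congr 1; ring

lemma Phi_eq_s11 (x : ℝ) :
    Phi x = (Real.sqrt (2 * Real.pi))⁻¹ * ∫ t in Set.Iio x, Real.exp (-t ^ 2 / 2) := by
  rw [Phi, MeasureTheory.integral_const_mul]

lemma one_sub_Phi (x : ℝ) : 1 - Phi x = (Real.sqrt (2 * Real.pi))⁻¹ * gaussTail x := by
  have h2π : (0:ℝ) < Real.sqrt (2 * Real.pi) := Real.sqrt_pos.2 (by positivity)
  have hsplit : (∫ t in Set.Iio x, Real.exp (-t ^ 2 / 2))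
      + (∫ t in Set.Ici x, Real.exp (-t ^ 2 / 2)) = Real.sqrt (2 * Real.pi) := by
    rw [intervalIntegral.integral_Iio_add_Ici aux_integrable.integrableOn aux_integrable.integrableOn,
      gauss_total]
  have hIci : (∫ t in Set.Ici x, Real.exp (-t ^ 2 / 2)) = gaussTail x :=
    integral_Ici_eq_integral_Ioi
  have hc1 : (Real.sqrt (2 * Real.pi))⁻¹ * Real.sqrt (2 * Real.pi) = 1 :=
    inv_mul_cancel₀ h2π.ne'
  have h2 : (Real.sqrt (2 * Real.pi))⁻¹ * (∫ t in Set.Iio x, Real.exp (-t ^ 2 / 2))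
      + (Real.sqrt (2 * Real.pi))⁻¹ * (∫ t in Set.Ici x, Real.exp (-t ^ 2 / 2))
      = (Real.sqrt (2 * Real.pi))⁻¹ * Real.sqrt (2 * Real.pi) := by
    rw [← mul_add, hsplit]
  rw [hc1] at h2
  rw [Phi_eq_s11, ← hIci]
  linarith

lemma gaussTail_pos (x : ℝ) : 0 < gaussTail x := by
  rw [gaussTail]
  rw [setIntegral_pos_iff_support_of_nonneg_ae
    (Filter.Eventually.of_forall fun t => (Real.exp_pos _).le) aux_integrable.integrableOn]
  have hsupp : (Function.support fun t : ℝ => Real.exp (-t ^ 2 / 2)) = Set.univ := by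
    ext t; simp [Function.support, (Real.exp_pos _).ne']
  rw [hsupp, Set.univ_inter]
  simp

lemma Iio_int_pos (x : ℝ) : 0 < ∫ t in Set.Iio x, Real.exp (-t ^ 2 / 2) := by
  rw [setIntegral_pos_iff_support_of_nonneg_ae
    (Filter.Eventually.of_forall fun t => (Real.exp_pos _).le) aux_integrable.integrableOn]
  have hsupp : (Function.support fun t : ℝ => Real.exp (-t ^ 2 / 2)) = Set.univ := by
    ext t; simp [Function.support, (Real.exp_pos _).ne']
  rw [hsupp, Set.univ_inter]
  simp [Real.volume_Iio]

lemma gaussTail_le {x : ℝ} (hx : 1 ≤ x) : gaussTail x ≤ Real.exp (-x ^ 2 / 2) := by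
  have hmono : gaussTail x ≤ ∫ t in Set.Ioi x, Real.exp (-x ^ 2 / 2 + x) * Real.exp (-t) := by
    rw [gaussTail]
    refine setIntegral_mono_on aux_integrable.integrableOn ?_ measurableSet_Ioi ?_
    · have h : IntegrableOn (fun t : ℝ => Real.exp (-x ^ 2 / 2 + x) * Real.exp (-1 * t))
          (Set.Ioi x) := (exp_neg_integrableOn_Ioi x one_pos).const_mul _
      refine IntegrableOn.congr_fun h (fun t _ => ?_) measurableSet_Ioi
      simp [neg_one_mul]
    · intro t ht
      rw [← Real.exp_add]
      apply Real.exp_le_exp.2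
      have htx : x ≤ t := le_of_lt ht
      nlinarith
  have hcomp : (∫ t in Set.Ioi x, Real.exp (-x ^ 2 / 2 + x) * Real.exp (-t))
      = Real.exp (-x ^ 2 / 2) := by
    rw [MeasureTheory.integral_const_mul, integral_exp_neg_Ioi, ← Real.exp_add]
    ring_nf
  linarith [hmono, hcomp.le, hcomp.ge]

lemma le_gaussTail {x : ℝ} (hx : 0 ≤ x) : Real.exp (-(x + 1) ^ 2 / 2) ≤ gaussTail x := by
  have h1 : Real.exp (-(x + 1) ^ 2 / 2)
      = ∫ _ in Set.Ioc x (x + 1), Real.exp (-(x + 1) ^ 2 / 2) := by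
    simp [Real.volume_Ioc]
  have h2 : (∫ _ in Set.Ioc x (x + 1), Real.exp (-(x + 1) ^ 2 / 2))
      ≤ ∫ t in Set.Ioc x (x + 1), Real.exp (-t ^ 2 / 2) := by
    refine setIntegral_mono_on (by simp) (aux_integrable.integrableOn) measurableSet_Ioc ?_
    intro t ht
    apply Real.exp_le_exp.2
    have h3 : x < t := ht.1
    have h4 : t ≤ x + 1 := ht.2
    nlinarith
  have h5 : (∫ t in Set.Ioc x (x + 1), Real.exp (-t ^ 2 / 2)) ≤ gaussTail x := by
    rw [gaussTail]
    refine setIntegral_mono_set aux_integrable.integrableOn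
      (Filter.Eventually.of_forall fun t => (Real.exp_pos _).le) ?_
    exact HasSubset.Subset.eventuallyLE Set.Ioc_subset_Ioi_self
  linarith

theorem stmt11 (a b : ℝ) (ha : 0 < a) :
    Filter.Tendsto (fun n : ℝ => logit (1 - Phi (a * Real.sqrt n + b)) / n)
      Filter.atTop (nhds (-a ^ 2 / 2)) := by
  have h2π : (0:ℝ) < Real.sqrt (2 * Real.pi) := Real.sqrt_pos.2 (by positivity)
  set c : ℝ := (Real.sqrt (2 * Real.pi))⁻¹ with hcdef
  have hc0 : 0 < c := inv_pos.2 h2π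
  have hsq : Tendsto (fun n : ℝ => Real.sqrt n) atTop atTop := by
    refine tendsto_atTop_atTop.2 fun C => ⟨(max C 0) ^ 2, fun n hn => ?_⟩
    have h1 := Real.sqrt_le_sqrt hn
    rw [Real.sqrt_sq (le_max_right C 0), max_le_iff] at h1
    exact h1.1
  have hx : Tendsto (fun n : ℝ => a * Real.sqrt n + b) atTop atTop :=
    tendsto_atTop_add_const_right _ b (hsq.const_mul_atTop ha)
  have hinv : Tendsto (fun n : ℝ => (Real.sqrt n)⁻¹) atTop (nhds 0) :=
    hsq.inv_tendsto_atTop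
  have hninv : Tendsto (fun n : ℝ => n⁻¹) atTop (nhds (0:ℝ)) := tendsto_inv_atTop_zero
  have hlogc : Tendsto (fun n : ℝ => Real.log c * n⁻¹) atTop (nhds 0) := by
    simpa using hninv.const_mul (Real.log c)
  have key : ∀ d : ℝ, Tendsto
      (fun n : ℝ => Real.log c * n⁻¹ - (a + d * (Real.sqrt n)⁻¹) ^ 2 / 2) atTop
      (nhds (-a ^ 2 / 2)) := by
    intro d
    have h1 : Tendsto (fun n : ℝ => a + d * (Real.sqrt n)⁻¹) atTop (nhds a) := by
      simpa using (hinv.const_mul d).const_add a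
    have h2 : Tendsto (fun n : ℝ => (a + d * (Real.sqrt n)⁻¹) ^ 2 / 2) atTop
        (nhds (a ^ 2 / 2)) := (h1.pow 2).div_const 2
    have := hlogc.sub h2
    rw [zero_sub] at this
    simpa [neg_div] using this
  -- auxiliary algebraic identity
  have halg : ∀ n : ℝ, 1 ≤ n → ∀ d : ℝ,
      Real.log c * n⁻¹ - (a + d * (Real.sqrt n)⁻¹) ^ 2 / 2
        = (Real.log c - (a * Real.sqrt n + d) ^ 2 / 2) / n := by
    intro n hn d
    have hn0 : (0:ℝ) < n := lt_of_lt_of_le one_pos hn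
    have hs0 : (0:ℝ) < Real.sqrt n := Real.sqrt_pos.2 hn0
    have hss : Real.sqrt n * Real.sqrt n = n := Real.mul_self_sqrt hn0.le
    field_simp
    nlinarith [sq_nonneg (Real.sqrt n), hss]
  -- eventual bounds for log (1 - Phi x) / n
  have hev : ∀ᶠ n : ℝ in atTop, (1:ℝ) ≤ n ∧ 1 ≤ a * Real.sqrt n + b :=
    (eventually_ge_atTop 1).and (hx.eventually_ge_atTop 1)
  have ev_up : ∀ᶠ n : ℝ in atTop,
      Real.log (1 - Phi (a * Real.sqrt n + b)) / n
        ≤ Real.log c * n⁻¹ - (a + b * (Real.sqrt n)⁻¹) ^ 2 / 2 := by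
    filter_upwards [hev] with n hn
    obtain ⟨hn1, hxn⟩ := hn
    have hn0 : (0:ℝ) < n := lt_of_lt_of_le one_pos hn1
    set x := a * Real.sqrt n + b with hxdef
    have hlog1 : Real.log (1 - Phi x) = Real.log c + Real.log (gaussTail x) := by
      rw [one_sub_Phi, Real.log_mul hc0.ne' (gaussTail_pos _).ne']
    have hub : Real.log (gaussTail x) ≤ -x ^ 2 / 2 := by
      have := Real.log_le_log (gaussTail_pos x) (gaussTail_le hxn)
      rwa [Real.log_exp] at this
    rw [halg n hn1 b, ← hxdef]
    exact div_le_div_of_nonneg_right (by linarith [hlog1, hub]) hn0.le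
  have ev_low : ∀ᶠ n : ℝ in atTop,
      Real.log c * n⁻¹ - (a + (b + 1) * (Real.sqrt n)⁻¹) ^ 2 / 2
        ≤ Real.log (1 - Phi (a * Real.sqrt n + b)) / n := by
    filter_upwards [hev] with n hn
    obtain ⟨hn1, hxn⟩ := hn
    have hn0 : (0:ℝ) < n := lt_of_lt_of_le one_pos hn1
    set x := a * Real.sqrt n + b with hxdef
    have hlog1 : Real.log (1 - Phi x) = Real.log c + Real.log (gaussTail x) := by
      rw [one_sub_Phi, Real.log_mul hc0.ne' (gaussTail_pos _).ne']
    have hlb : -(x + 1) ^ 2 / 2 ≤ Real.log (gaussTail x) := by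
      have hx0 : (0:ℝ) ≤ x := le_trans zero_le_one hxn
      have := Real.log_le_log (Real.exp_pos _) (le_gaussTail hx0)
      rwa [Real.log_exp] at this
    have hrw : a * Real.sqrt n + (b + 1) = x + 1 := by rw [hxdef]; ring
    rw [halg n hn1 (b + 1), hrw]
    exact div_le_div_of_nonneg_right (by linarith [hlog1, hlb]) hn0.le
  have tendstoA : Tendsto (fun n : ℝ => Real.log (1 - Phi (a * Real.sqrt n + b)) / n)
      atTop (nhds (-a ^ 2 / 2)) :=
    tendsto_of_tendsto_of_tendsto_of_le_of_le' (key (b + 1)) (key b) ev_low ev_up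
  -- Phi → 1 part
  have hx2 : Tendsto (fun n : ℝ => (a * Real.sqrt n + b) ^ 2) atTop atTop := by
    have h := hx.atTop_mul_atTop₀ hx
    refine Tendsto.congr (fun n => ?_) h
    ring
  have hxbot : Tendsto (fun n : ℝ => -(a * Real.sqrt n + b) ^ 2 / 2) atTop atBot := by
    have h2 : Tendsto (fun n : ℝ => (a * Real.sqrt n + b) ^ 2 / 2) atTop atTop :=
      hx2.atTop_div_const (by norm_num)
    have h3 := tendsto_neg_atBot_iff.2 h2
    refine Tendsto.congr (fun n => ?_) h3
    rw [neg_div]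
  have hE : Tendsto (fun n : ℝ => Real.exp (-(a * Real.sqrt n + b) ^ 2 / 2)) atTop
      (nhds 0) := Real.tendsto_exp_atBot.comp hxbot
  have hT0 : Tendsto (fun n : ℝ => gaussTail (a * Real.sqrt n + b)) atTop (nhds 0) := by
    refine tendsto_of_tendsto_of_tendsto_of_le_of_le' tendsto_const_nhds hE ?_ ?_
    · exact Eventually.of_forall fun n => (gaussTail_pos _).le
    · filter_upwards [hx.eventually_ge_atTop 1] with n hxn
      exact gaussTail_le hxn
  have hPhi1 : Tendsto (fun n : ℝ => Phi (a * Real.sqrt n + b)) atTop (nhds 1) := by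
    have h := (tendsto_const_nhds : Tendsto (fun _ : ℝ => (1:ℝ)) atTop (nhds 1)).sub
      (hT0.const_mul c)
    have heq : ∀ n : ℝ, (1:ℝ) - c * gaussTail (a * Real.sqrt n + b)
        = Phi (a * Real.sqrt n + b) := fun n => by
      have := one_sub_Phi (a * Real.sqrt n + b); linarith
    simpa using Tendsto.congr heq h
  have hlogPhi : Tendsto (fun n : ℝ => Real.log (Phi (a * Real.sqrt n + b))) atTop
      (nhds 0) := by
    have := (Real.continuousAt_log one_ne_zero).tendsto.comp hPhi1
    simpa [Function.comp_def] using this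
  have hB : Tendsto (fun n : ℝ => Real.log (Phi (a * Real.sqrt n + b)) * n⁻¹) atTop
      (nhds 0) := by
    simpa using hlogPhi.mul hninv
  have hfinal := tendstoA.sub hB
  rw [sub_zero] at hfinal
  refine Tendsto.congr' ?_ hfinal
  filter_upwards [eventually_gt_atTop (0:ℝ)] with n hn
  rw [logit, sub_sub_cancel, sub_div, div_eq_mul_inv (Real.log (Phi _))]
end
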